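/- Let γ₁, γ₂: S¹ → ℝ⁴ be Lipschitz curves with disjoint images and let g(s,t) = (γ₁(s)-γ₂(t))/|γ₁(s)-γ₂(t)| be the Gauss map. Then for almost every (s,t), the Jacobian of g satisfies |Jac g|(s,t) ≤ |γ₁'(s)||γ₂'(t)| / |γ₁(s)-γ₂(t)|². -/

import Mathlib

open Real MeasureTheory
open scoped RealInnerProductSpace

private lemma hasDerivAt_normalize {w : ℝ → EuclideanSpace ℝ (Fin 4)} {u : EuclideanSpace ℝ (Fin 4)}
    {s : ℝ} (hx : w s ≠ 0) (hw : HasDerivAt w u s) :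
    HasDerivAt (fun s => ‖w s‖⁻¹ • w s)
      (‖w s‖⁻¹ • u - (⟪w s, u⟫ / ‖w s‖ ^ 3) • w s) s := by
  have hr : ‖w s‖ ≠ 0 := norm_ne_zero_iff.mpr hx
  have hq : HasDerivAt (fun t => ⟪w t, w t⟫) (⟪w s, u⟫ + ⟪u, w s⟫) s :=
    hw.inner ℝ hw
  have hq' : HasDerivAt (fun t => ⟪w t, w t⟫) (2 * ⟪w s, u⟫) s := by
    convert hq using 1
    rw [real_inner_comm u (w s)]; ring
  have hqpos : ⟪w s, w s⟫ ≠ 0 := by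
    rw [real_inner_self_eq_norm_sq]
    positivity
  have hn : HasDerivAt (fun t => Real.sqrt ⟪w t, w t⟫)
      (1 / (2 * Real.sqrt ⟪w s, w s⟫) * (2 * ⟪w s, u⟫)) s :=
    (Real.hasDerivAt_sqrt hqpos).comp s hq'
  have hsq : Real.sqrt ⟪w s, w s⟫ = ‖w s‖ := by
    rw [real_inner_self_eq_norm_sq]; exact Real.sqrt_sq (norm_nonneg _)
  have hnorm : HasDerivAt (fun t => ‖w t‖) (⟪w s, u⟫ / ‖w s‖) s := by
    have heq : (fun t => Real.sqrt ⟪w t, w t⟫) = fun t => ‖w t‖ := by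
      funext t
      rw [real_inner_self_eq_norm_sq]; exact Real.sqrt_sq (norm_nonneg _)
    rw [← heq]
    convert hn using 1
    rw [hsq]; field_simp
  have hinv : HasDerivAt (fun t => ‖w t‖⁻¹) (-(⟪w s, u⟫ / ‖w s‖) / ‖w s‖ ^ 2) s :=
    hnorm.inv hr
  have hfin := hinv.smul hw
  have hcoef : ‖w s‖⁻¹ • u - (⟪w s, u⟫ / ‖w s‖ ^ 3) • w s
      = ‖w s‖⁻¹ • u + (-(⟪w s, u⟫ / ‖w s‖) / ‖w s‖ ^ 2) • w s := by
    rw [sub_eq_add_neg, ← neg_smul]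
    congr 2
    rw [neg_div, div_div, show ‖w s‖ * ‖w s‖ ^ 2 = ‖w s‖ ^ 3 by ring]
  rw [hcoef]
  exact hfin

private lemma normalize_deriv_norm_le {x u : EuclideanSpace ℝ (Fin 4)} (hx : x ≠ 0) :
    ‖‖x‖⁻¹ • u - (⟪x, u⟫ / ‖x‖ ^ 3) • x‖ ≤ ‖u‖ / ‖x‖ := by
  have hr : (0:ℝ) < ‖x‖ := norm_pos_iff.mpr hx
  have hsq : ‖‖x‖⁻¹ • u - (⟪x, u⟫ / ‖x‖ ^ 3) • x‖ ^ 2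
      = ‖u‖ ^ 2 / ‖x‖ ^ 2 - ⟪x, u⟫ ^ 2 / ‖x‖ ^ 4 := by
    rw [← real_inner_self_eq_norm_sq]
    simp only [inner_sub_sub_self, inner_smul_left, inner_smul_right,
      real_inner_smul_left, real_inner_smul_right]
    rw [real_inner_self_eq_norm_sq x, real_inner_self_eq_norm_sq u,
      real_inner_comm u x]
    have : (⟪x, u⟫ / ‖x‖ ^ 3) * ((⟪x, u⟫ / ‖x‖ ^ 3) * ‖x‖ ^ 2) = ⟪x, u⟫ ^ 2 / ‖x‖ ^ 4 := by
      field_simp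
    simp only [conj_trivial]
    field_simp
    ring
  have h1 : ‖‖x‖⁻¹ • u - (⟪x, u⟫ / ‖x‖ ^ 3) • x‖ ^ 2 ≤ (‖u‖ / ‖x‖) ^ 2 := by
    rw [hsq, div_pow]
    have : (0:ℝ) ≤ ⟪x, u⟫ ^ 2 / ‖x‖ ^ 4 := by positivity
    linarith
  have := Real.sqrt_le_sqrt h1
  rwa [Real.sqrt_sq (norm_nonneg _), Real.sqrt_sq (by positivity)] at this

/-- For the Gauss map `g(s,t) = (γ₁(s) - γ₂(t))/|γ₁(s) - γ₂(t)|` of a link in ℝ⁴,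
for almost every `(s,t)` the Jacobian satisfies
`|Jac g|(s,t) ≤ |γ₁'(s)||γ₂'(t)|/|γ₁(s)-γ₂(t)|²`. -/
theorem gauss_map_jacobian_bound
    (γ₁ γ₂ : ℝ → EuclideanSpace ℝ (Fin 4)) (K₁ K₂ : NNReal)
    (h₁ : LipschitzWith K₁ γ₁) (h₂ : LipschitzWith K₂ γ₂)
    (hp₁ : Function.Periodic γ₁ (2 * π)) (hp₂ : Function.Periodic γ₂ (2 * π))
    (hdisj : ∀ s t, γ₁ s ≠ γ₂ t)
    (g : ℝ × ℝ → EuclideanSpace ℝ (Fin 4))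
    (hg : ∀ p : ℝ × ℝ, g p = ‖γ₁ p.1 - γ₂ p.2‖⁻¹ • (γ₁ p.1 - γ₂ p.2)) :
    ∀ᵐ p : ℝ × ℝ,
      Real.sqrt (‖deriv (fun s => g (s, p.2)) p.1‖ ^ 2 * ‖deriv (fun t => g (p.1, t)) p.2‖ ^ 2
          - ⟪deriv (fun s => g (s, p.2)) p.1, deriv (fun t => g (p.1, t)) p.2⟫ ^ 2)
        ≤ ‖deriv γ₁ p.1‖ * ‖deriv γ₂ p.2‖ / ‖γ₁ p.1 - γ₂ p.2‖ ^ 2 := by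
  have hd1 : ∀ᵐ s : ℝ, DifferentiableAt ℝ γ₁ s := h₁.ae_differentiableAt
  have hd2 : ∀ᵐ t : ℝ, DifferentiableAt ℝ γ₂ t := h₂.ae_differentiableAt
  have hae1 : ∀ᵐ p : ℝ × ℝ, DifferentiableAt ℝ γ₁ p.1 := by
    rw [ae_iff] at hd1 ⊢
    refine measure_mono_null (fun p hp => ?_)
      (show (volume : Measure (ℝ × ℝ)) ({s | ¬DifferentiableAt ℝ γ₁ s} ×ˢ Set.univ) = 0 from ?_)
    · exact Set.mk_mem_prod hp (Set.mem_univ _)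
    · rw [Measure.volume_eq_prod, Measure.prod_prod, hd1, zero_mul]
  have hae2 : ∀ᵐ p : ℝ × ℝ, DifferentiableAt ℝ γ₂ p.2 := by
    rw [ae_iff] at hd2 ⊢
    refine measure_mono_null (fun p hp => ?_)
      (show (volume : Measure (ℝ × ℝ)) (Set.univ ×ˢ {t | ¬DifferentiableAt ℝ γ₂ t}) = 0 from ?_)
    · exact Set.mk_mem_prod (Set.mem_univ _) hp
    · rw [Measure.volume_eq_prod, Measure.prod_prod, hd2, mul_zero]
  filter_upwards [hae1, hae2] with p hdiff1 hdiff2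
  obtain ⟨s, t⟩ := p
  simp only at hdiff1 hdiff2 ⊢
  set x : EuclideanSpace ℝ (Fin 4) := γ₁ s - γ₂ t with hx_def
  have hx : x ≠ 0 := sub_ne_zero.mpr (hdisj s t)
  have hr : (0:ℝ) < ‖x‖ := norm_pos_iff.mpr hx
  set u := deriv γ₁ s
  set v := deriv γ₂ t
  -- derivative in s
  have hw1 : HasDerivAt (fun s' => γ₁ s' - γ₂ t) u s := (hdiff1.hasDerivAt).sub_const _
  have hD : HasDerivAt (fun s' => g (s', t)) (‖x‖⁻¹ • u - (⟪x, u⟫ / ‖x‖ ^ 3) • x) s := by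
    have := hasDerivAt_normalize (w := fun s' => γ₁ s' - γ₂ t) (u := u) (s := s) hx hw1
    have heq : (fun s' => g (s', t)) = fun s' => ‖γ₁ s' - γ₂ t‖⁻¹ • (γ₁ s' - γ₂ t) := by
      funext s'; exact hg (s', t)
    rw [heq]
    exact this
  have hw2 : HasDerivAt (fun t' => γ₁ s - γ₂ t') (-v) t := (hdiff2.hasDerivAt).const_sub _
  have hE : HasDerivAt (fun t' => g (s, t')) (‖x‖⁻¹ • (-v) - (⟪x, -v⟫ / ‖x‖ ^ 3) • x) t := by
    have := hasDerivAt_normalize (w := fun t' => γ₁ s - γ₂ t') (u := -v) (s := t) hx hw2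
    have heq : (fun t' => g (s, t')) = fun t' => ‖γ₁ s - γ₂ t'‖⁻¹ • (γ₁ s - γ₂ t') := by
      funext t'; exact hg (s, t')
    rw [heq]
    exact this
  set D := ‖x‖⁻¹ • u - (⟪x, u⟫ / ‖x‖ ^ 3) • x with hD_def
  set E := ‖x‖⁻¹ • (-v) - (⟪x, -v⟫ / ‖x‖ ^ 3) • x with hE_def
  rw [hD.deriv, hE.deriv]
  have hDle : ‖D‖ ≤ ‖u‖ / ‖x‖ := normalize_deriv_norm_le hx
  have hEle : ‖E‖ ≤ ‖v‖ / ‖x‖ := by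
    have := normalize_deriv_norm_le (x := x) (u := -v) hx
    rwa [norm_neg] at this
  calc Real.sqrt (‖D‖ ^ 2 * ‖E‖ ^ 2 - ⟪D, E⟫ ^ 2)
      ≤ Real.sqrt (‖D‖ ^ 2 * ‖E‖ ^ 2) := by
        apply Real.sqrt_le_sqrt
        have : (0:ℝ) ≤ ⟪D, E⟫ ^ 2 := sq_nonneg _
        linarith
    _ = ‖D‖ * ‖E‖ := by
        rw [← mul_pow, Real.sqrt_sq (by positivity)]
    _ ≤ (‖u‖ / ‖x‖) * (‖v‖ / ‖x‖) :=
        mul_le_mul hDle hEle (norm_nonneg _) (by positivity)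
    _ = ‖u‖ * ‖v‖ / ‖x‖ ^ 2 := by
        rw [div_mul_div_comm, sq]
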